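/- If the vertex set of a graph G can be partitioned into c independent sets I_1, ..., I_c, then every k-plex S contained in G satisfies |S| ≤ Σ_{i=1}^{c} min(|I_i|, k). -/
import Mathlib


open scoped Classical
open Finset

/-- A `k`-plex: every vertex of `S` has at least `|S| - k` neighbors inside `S`. -/
def IsKPlex {V : Type*} (G : SimpleGraph V) (k : ℕ) (S : Finset V) : Prop :=
  ∀ v ∈ S, S.card ≤ (S.filter (fun w => G.Adj v w)).card + k

/-- Color bound: if the vertex set of `G` is partitioned into independent sets,
then every `k`-plex `S` satisfies `|S| ≤ Σ_i min(|I_i|, k)`. -/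
theorem kplex_color_bound {V : Type*} [Fintype V] (G : SimpleGraph V) (k : ℕ)
    (Part : Finset (Finset V))
    (hdisj : ∀ I ∈ Part, ∀ J ∈ Part, I ≠ J → Disjoint I J)
    (hcover : ∀ v : V, ∃ I ∈ Part, v ∈ I)
    (hind : ∀ I ∈ Part, ∀ u ∈ I, ∀ w ∈ I, ¬ G.Adj u w)
    (S : Finset V) (hS : IsKPlex G k S) :
    S.card ≤ ∑ I ∈ Part, min I.card k := by
  have hSeq : S = Part.biUnion (fun I => S ∩ I) := by
    ext v
    simp only [Finset.mem_biUnion, Finset.mem_inter]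
    constructor
    · intro hv
      obtain ⟨I, hI, hvI⟩ := hcover v
      exact ⟨I, hI, hv, hvI⟩
    · rintro ⟨I, _, hv, _⟩; exact hv
  have hcard : S.card = ∑ I ∈ Part, (S ∩ I).card := by
    rw [hSeq, Finset.card_biUnion]
    · rw [← hSeq]
    · intro I hI J hJ hne
      exact ((hdisj I hI J hJ hne).mono (Finset.inter_subset_right)
        (Finset.inter_subset_right))
  rw [hcard]
  apply Finset.sum_le_sum
  intro I hI
  rcases (S ∩ I).eq_empty_or_nonempty with h | ⟨v, hv⟩
  · simp [h]
  · refine le_min (Finset.card_le_card Finset.inter_subset_right) ?_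
    have hvS : v ∈ S := (Finset.mem_inter.mp hv).1
    have hvI : v ∈ I := (Finset.mem_inter.mp hv).2
    have hsub : S.filter (fun w => G.Adj v w) ⊆ S \ (S ∩ I) := by
      intro w hw
      rw [Finset.mem_filter] at hw
      rw [Finset.mem_sdiff]
      refine ⟨hw.1, fun hwI => ?_⟩
      exact hind I hI v hvI w (Finset.mem_inter.mp hwI).2 hw.2
    have h1 : (S.filter (fun w => G.Adj v w)).card ≤ S.card - (S ∩ I).card := by
      calc _ ≤ (S \ (S ∩ I)).card := Finset.card_le_card hsub
        _ = S.card - (S ∩ I).card := Finset.card_sdiff_of_subset Finset.inter_subset_left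
    have h2 := hS v hvS
    have h3 : (S ∩ I).card ≤ S.card := Finset.card_le_card Finset.inter_subset_left
    omega
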